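/- Let G be a finite simple graph with an even number 2n of vertices and m edges. Then there exists a balanced finite simple graph G_0 with 2n vertices and m edges such that the number of perfect matchings of G is at most the number of perfect matchings of G_0. -/

import Mathlib

open Nat

/-- The degree of a vertex, as the cardinality of its neighbor set. -/
noncomputable def ndeg {V : Type*} (G : SimpleGraph V) (v : V) : ℕ :=
  (G.neighborSet v).ncard

/-- The number of perfect matchings of a simple graph. -/
noncomputable def perfmat {V : Type*} (G : SimpleGraph V) : ℕ :=
  {M : G.Subgraph | M.IsPerfectMatching}.ncard

/-- A graph is unbalanced if there are vertices `u, v` with `deg v ≥ deg u + 2` such that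
every neighbor of `u` different from `v` is a neighbor of `v`; it is balanced otherwise. -/
def BalancedGraph {V : Type*} (G : SimpleGraph V) : Prop :=
  ¬ ∃ u v : V, ndeg G u + 2 ≤ ndeg G v ∧ ∀ w, G.Adj u w → w ≠ v → G.Adj v w

section Swap

variable {V : Type*}

private lemma subgraph_finite [Finite V] (G : SimpleGraph V) : Finite G.Subgraph :=
  Finite.of_injective (fun M : G.Subgraph => (M.verts, M.Adj))
    (by rintro ⟨⟩ ⟨⟩ h; simp only [Prod.mk.injEq] at h
        exact SimpleGraph.Subgraph.ext h.1 h.2)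

def swapG (G : SimpleGraph V) (u v w : V) : SimpleGraph V :=
  SimpleGraph.fromEdgeSet ((G.edgeSet \ {s(v,w)}) ∪ {s(u,w)})

variable {G : SimpleGraph V} {u v w : V}

lemma swapG_adj (huw : u ≠ w) {a b : V} :
    (swapG G u v w).Adj a b ↔ (G.Adj a b ∧ s(a,b) ≠ s(v,w)) ∨ s(a,b) = s(u,w) := by
  rw [swapG, SimpleGraph.fromEdgeSet_adj]
  simp only [Set.mem_union, Set.mem_diff, Set.mem_singleton_iff, SimpleGraph.mem_edgeSet]
  constructor
  · rintro ⟨(⟨h1, h2⟩ | h3), _⟩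
    · exact Or.inl ⟨h1, h2⟩
    · exact Or.inr h3
  · rintro (⟨h1, h2⟩ | h3)
    · exact ⟨Or.inl ⟨h1, h2⟩, h1.ne⟩
    · refine ⟨Or.inr h3, ?_⟩
      rcases Sym2.eq_iff.1 h3 with ⟨rfl, rfl⟩ | ⟨rfl, rfl⟩
      · exact huw
      · exact huw.symm

lemma swapG_edgeSet (huw : u ≠ w) :
    (swapG G u v w).edgeSet = (G.edgeSet \ {s(v,w)}) ∪ {s(u,w)} := by
  rw [swapG, SimpleGraph.edgeSet_fromEdgeSet]
  ext e
  simp only [Set.mem_diff, Set.mem_union, Set.mem_singleton_iff, Set.mem_setOf_eq]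
  constructor
  · tauto
  · rintro (⟨he, hne⟩ | rfl)
    · exact ⟨Or.inl ⟨he, hne⟩, SimpleGraph.not_isDiag_of_mem_edgeSet G he⟩
    · exact ⟨Or.inr rfl, by simpa using huw⟩

lemma swapG_ncard [Finite V] (hvw : G.Adj v w) (hnuw : ¬ G.Adj u w) (huw : u ≠ w) :
    (swapG G u v w).edgeSet.ncard = G.edgeSet.ncard := by
  rw [swapG_edgeSet huw]
  have hfin : G.edgeSet.Finite := Set.toFinite _
  have h1 : Disjoint (G.edgeSet \ {s(v,w)}) {s(u,w)} := by
    rw [Set.disjoint_singleton_right]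
    intro h
    exact hnuw ((SimpleGraph.mem_edgeSet G).1 h.1)
  rw [Set.ncard_union_eq h1 hfin.diff (Set.finite_singleton _), Set.ncard_singleton]
  exact Set.ncard_diff_singleton_add_one ((SimpleGraph.mem_edgeSet G).2 hvw) hfin

lemma swapG_nbr_u (hnuw : ¬ G.Adj u w) (huw : u ≠ w) (huv : u ≠ v) :
    (swapG G u v w).neighborSet u = insert w (G.neighborSet u) := by
  ext y
  simp only [SimpleGraph.mem_neighborSet, Set.mem_insert_iff]
  rw [swapG_adj huw]
  constructor
  · rintro (⟨h1, _⟩ | h3)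
    · exact Or.inr h1
    · rcases Sym2.eq_iff.1 h3 with ⟨-, rfl⟩ | ⟨h, -⟩
      · exact Or.inl rfl
      · exact absurd h huw
  · rintro (rfl | h)
    · exact Or.inr rfl
    · refine Or.inl ⟨h, ?_⟩
      intro he
      rcases Sym2.eq_iff.1 he with ⟨h1, -⟩ | ⟨h1, -⟩
      · exact huv h1
      · exact huw h1

lemma swapG_nbr_v (hvw : G.Adj v w) (huw : u ≠ w) (huv : u ≠ v) :
    (swapG G u v w).neighborSet v = G.neighborSet v \ {w} := by
  ext y
  simp only [SimpleGraph.mem_neighborSet, Set.mem_diff, Set.mem_singleton_iff]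
  rw [swapG_adj huw]
  constructor
  · rintro (⟨h1, h2⟩ | h3)
    · refine ⟨h1, fun hyw => h2 ?_⟩
      rw [hyw]
    · rcases Sym2.eq_iff.1 h3 with ⟨h, -⟩ | ⟨h, -⟩
      · exact absurd h.symm huv
      · exact absurd h hvw.ne
  · rintro ⟨h1, h2⟩
    refine Or.inl ⟨h1, fun he => ?_⟩
    rcases Sym2.eq_iff.1 he with ⟨-, h⟩ | ⟨h, -⟩
    · exact h2 h
    · exact hvw.ne h

lemma swapG_nbr_w (hvw : G.Adj v w) (huw : u ≠ w) :
    (swapG G u v w).neighborSet w = insert u (G.neighborSet w \ {v}) := by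
  ext y
  simp only [SimpleGraph.mem_neighborSet, Set.mem_insert_iff, Set.mem_diff,
    Set.mem_singleton_iff]
  rw [swapG_adj huw]
  constructor
  · rintro (⟨h1, h2⟩ | h3)
    · refine Or.inr ⟨h1, fun hyv => h2 ?_⟩
      rw [hyv, Sym2.eq_swap]
    · rcases Sym2.eq_iff.1 h3 with ⟨h, -⟩ | ⟨-, rfl⟩
      · exact absurd h.symm huw
      · exact Or.inl rfl
  · rintro (rfl | ⟨h1, h2⟩)
    · exact Or.inr (Sym2.eq_swap)
    · refine Or.inl ⟨h1, fun he => ?_⟩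
      rcases Sym2.eq_iff.1 he with ⟨h, -⟩ | ⟨-, h⟩
      · exact hvw.ne h.symm
      · exact h2 h

lemma swapG_nbr_other (hvw : G.Adj v w) (huw : u ≠ w) {a : V}
    (hau : a ≠ u) (hav : a ≠ v) (haw : a ≠ w) :
    (swapG G u v w).neighborSet a = G.neighborSet a := by
  ext y
  simp only [SimpleGraph.mem_neighborSet]
  rw [swapG_adj huw]
  constructor
  · rintro (⟨h1, -⟩ | h3)
    · exact h1
    · rcases Sym2.eq_iff.1 h3 with ⟨h, -⟩ | ⟨h, -⟩
      · exact absurd h hau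
      · exact absurd h haw
  · intro h
    refine Or.inl ⟨h, fun he => ?_⟩
    rcases Sym2.eq_iff.1 he with ⟨h1, -⟩ | ⟨h1, -⟩
    · exact hav h1
    · exact haw h1

lemma swapG_ndeg_u [Finite V] (hnuw : ¬ G.Adj u w) (huw : u ≠ w) (huv : u ≠ v) :
    ndeg (swapG G u v w) u = ndeg G u + 1 := by
  rw [ndeg, swapG_nbr_u hnuw huw huv,
    Set.ncard_insert_of_notMem (by simpa using hnuw) (Set.toFinite _)]
  rfl

lemma swapG_ndeg_v [Finite V] (hvw : G.Adj v w) (huw : u ≠ w) (huv : u ≠ v) :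
    ndeg (swapG G u v w) v + 1 = ndeg G v := by
  rw [ndeg, swapG_nbr_v hvw huw huv]
  exact Set.ncard_diff_singleton_add_one (by simpa using hvw) (Set.toFinite _)

lemma swapG_ndeg_w [Finite V] (hvw : G.Adj v w) (hnuw : ¬ G.Adj u w) (huw : u ≠ w) :
    ndeg (swapG G u v w) w = ndeg G w := by
  rw [ndeg, swapG_nbr_w hvw huw]
  rw [Set.ncard_insert_of_notMem (by simp [hnuw]; intro h; exact absurd h.symm hnuw)
    ((Set.toFinite _))]
  rw [Set.ncard_diff_singleton_add_one (by simpa using hvw.symm) (Set.toFinite _)]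
  rfl

lemma swapG_ndeg_other [Finite V] (hvw : G.Adj v w) (huw : u ≠ w) {a : V}
    (hau : a ≠ u) (hav : a ≠ v) (haw : a ≠ w) :
    ndeg (swapG G u v w) a = ndeg G a := by
  rw [ndeg, swapG_nbr_other hvw huw hau hav haw]; rfl

lemma swapG_measure [Fintype V] (hvw : G.Adj v w) (hnuw : ¬ G.Adj u w) (huw : u ≠ w)
    (huv : u ≠ v) (hdeg : ndeg G u + 2 ≤ ndeg G v) :
    ∑ a, ndeg (swapG G u v w) a ^ 2 < ∑ a, ndeg G a ^ 2 := by
  classical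
  have hvu : v ≠ u := huv.symm
  have hmemv : v ∈ Finset.univ.erase u := Finset.mem_erase.2 ⟨hvu, Finset.mem_univ v⟩
  rw [← Finset.add_sum_erase _ (fun a => ndeg (swapG G u v w) a ^ 2) (Finset.mem_univ u),
    ← Finset.add_sum_erase _ (fun a => ndeg (swapG G u v w) a ^ 2) hmemv,
    ← Finset.add_sum_erase _ (fun a => ndeg G a ^ 2) (Finset.mem_univ u),
    ← Finset.add_sum_erase _ (fun a => ndeg G a ^ 2) hmemv]
  have hrest : ∑ a ∈ (Finset.univ.erase u).erase v, ndeg (swapG G u v w) a ^ 2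
      = ∑ a ∈ (Finset.univ.erase u).erase v, ndeg G a ^ 2 := by
    refine Finset.sum_congr rfl fun a ha => ?_
    rw [Finset.mem_erase, Finset.mem_erase] at ha
    by_cases haw : a = w
    · subst haw; rw [swapG_ndeg_w hvw hnuw huw]
    · rw [swapG_ndeg_other hvw huw ha.2.1 ha.1 haw]
  rw [hrest, swapG_ndeg_u hnuw huw huv]
  have h2 := swapG_ndeg_v hvw huw huv
  set A := ndeg G u with hA
  set B := ndeg (swapG G u v w) v with hB
  have hAB : A + 1 ≤ B := by omega
  rw [← h2]
  have : (A + 1) ^ 2 + B ^ 2 < A ^ 2 + (B + 1) ^ 2 := by nlinarith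
  omega

end Swap
section Matchings

variable {V : Type*} {G G' : SimpleGraph V} {u v w x : V}

noncomputable def mpart (M : G.Subgraph) (hPM : M.IsPerfectMatching) (a : V) : V :=
  (hPM.1 (hPM.2 a)).exists.choose

lemma mpart_adj (M : G.Subgraph) (hPM : M.IsPerfectMatching) (a : V) :
    M.Adj a (mpart M hPM a) := (hPM.1 (hPM.2 a)).exists.choose_spec

lemma madj_unique {M : G.Subgraph} (hPM : M.IsPerfectMatching) {a b c : V}
    (h1 : M.Adj a b) (h2 : M.Adj a c) : b = c := by
  obtain ⟨d, -, hd⟩ := hPM.1 (hPM.2 a)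
  rw [hd b h1, hd c h2]

def trivSub (G' : SimpleGraph V) (M : G.Subgraph) (hle : ∀ a b, M.Adj a b → G'.Adj a b) :
    G'.Subgraph where
  verts := Set.univ
  Adj := M.Adj
  adj_sub := fun h => hle _ _ h
  edge_vert := fun _ => Set.mem_univ _
  symm := M.symm

lemma trivSub_isPM {M : G.Subgraph} (hPM : M.IsPerfectMatching)
    (hle : ∀ a b, M.Adj a b → G'.Adj a b) :
    (trivSub G' M hle).IsPerfectMatching := by
  constructor
  · intro a _
    exact hPM.1 (hPM.2 a)
  · intro a; exact Set.mem_univ a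

@[reducible] def swapRel (M : G.Subgraph) (u v w x a b : V) : Prop :=
  (M.Adj a b ∧ s(a,b) ≠ s(v,w) ∧ s(a,b) ≠ s(u,x)) ∨ s(a,b) = s(u,w) ∨ s(a,b) = s(v,x)

def swapSub (G' : SimpleGraph V) (M : G.Subgraph) (u v w x : V)
    (h1 : G'.Adj u w) (h2 : G'.Adj v x)
    (h3 : ∀ a b, M.Adj a b → s(a,b) ≠ s(v,w) → s(a,b) ≠ s(u,x) → G'.Adj a b) :
    G'.Subgraph where
  verts := Set.univ
  Adj := swapRel M u v w x
  adj_sub := by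
    intro a b hh
    rw [swapRel] at hh
    revert hh
    rintro (⟨hM, hn1, hn2⟩ | h | h)
    · exact h3 a b hM hn1 hn2
    · rcases Sym2.eq_iff.1 h with ⟨rfl, rfl⟩ | ⟨rfl, rfl⟩
      · exact h1
      · exact h1.symm
    · rcases Sym2.eq_iff.1 h with ⟨rfl, rfl⟩ | ⟨rfl, rfl⟩
      · exact h2
      · exact h2.symm
  edge_vert := fun _ => Set.mem_univ _
  symm := by
    constructor
    intro a b hh
    rw [swapRel] at hh ⊢
    revert hh
    rintro (⟨hM, hn1, hn2⟩ | h | h)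
    · exact Or.inl ⟨hM.symm, fun hh => hn1 (Sym2.eq_swap.trans hh),
        fun hh => hn2 (Sym2.eq_swap.trans hh)⟩
    · exact Or.inr (Or.inl (Sym2.eq_swap.trans h))
    · exact Or.inr (Or.inr (Sym2.eq_swap.trans h))

lemma swapSub_isPM {M : G.Subgraph} (hPM : M.IsPerfectMatching)
    (hMvw : M.Adj v w) (hMux : M.Adj u x)
    (huv : u ≠ v) (huw : u ≠ w) (hxv : x ≠ v) (hxw : x ≠ w)
    {h1 : G'.Adj u w} {h2 : G'.Adj v x}
    {h3 : ∀ a b, M.Adj a b → s(a,b) ≠ s(v,w) → s(a,b) ≠ s(u,x) → G'.Adj a b} :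
    (swapSub G' M u v w x h1 h2 h3).IsPerfectMatching := by
  have hvwne : v ≠ w := (M.adj_sub hMvw).ne
  have hxu : x ≠ u := (M.adj_sub hMux).ne'
  constructor
  · intro a _
    rcases eq_or_ne a u with rfl | hau
    · refine ⟨w, Or.inr (Or.inl rfl), ?_⟩
      rintro c (⟨hM, -, hn2⟩ | h | h)
      · have hc : c = x := madj_unique hPM hM hMux
        exact absurd (by rw [hc]) hn2
      · rcases Sym2.eq_iff.1 h with ⟨-, rfl⟩ | ⟨h', -⟩
        · rfl
        · exact absurd h' huw
      · rcases Sym2.eq_iff.1 h with ⟨h', -⟩ | ⟨h', -⟩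
        · exact absurd h' huv
        · exact absurd h'.symm hxu
    rcases eq_or_ne a w with rfl | haw
    · refine ⟨u, Or.inr (Or.inl Sym2.eq_swap.symm), ?_⟩
      rintro c (⟨hM, hn1, -⟩ | h | h)
      · have hc : c = v := madj_unique hPM hM hMvw.symm
        exact absurd (by rw [hc, Sym2.eq_swap]) hn1
      · rcases Sym2.eq_iff.1 h with ⟨h', -⟩ | ⟨-, rfl⟩
        · exact absurd h'.symm huw
        · rfl
      · rcases Sym2.eq_iff.1 h with ⟨h', -⟩ | ⟨h', -⟩
        · exact absurd h' hvwne.symm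
        · exact absurd h'.symm hxw
    rcases eq_or_ne a v with rfl | hav
    · refine ⟨x, Or.inr (Or.inr rfl), ?_⟩
      rintro c (⟨hM, hn1, -⟩ | h | h)
      · have hc : c = w := madj_unique hPM hM hMvw
        exact absurd (by rw [hc]) hn1
      · rcases Sym2.eq_iff.1 h with ⟨h', -⟩ | ⟨h', -⟩
        · exact absurd h'.symm huv
        · exact absurd h' hvwne
      · rcases Sym2.eq_iff.1 h with ⟨-, rfl⟩ | ⟨h', -⟩
        · rfl
        · exact absurd h'.symm hxv
    rcases eq_or_ne a x with rfl | hax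
    · refine ⟨v, Or.inr (Or.inr Sym2.eq_swap.symm), ?_⟩
      rintro c (⟨hM, -, hn2⟩ | h | h)
      · have hc : c = u := madj_unique hPM hM hMux.symm
        exact absurd (by rw [hc, Sym2.eq_swap]) hn2
      · rcases Sym2.eq_iff.1 h with ⟨h', -⟩ | ⟨h', -⟩
        · exact absurd h' hxu
        · exact absurd h' hxw
      · rcases Sym2.eq_iff.1 h with ⟨h', -⟩ | ⟨-, rfl⟩
        · exact absurd h' hxv
        · rfl
    · obtain ⟨b, hb, hbu⟩ := hPM.1 (hPM.2 a)
      have hbu' : b ≠ u := by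
        rintro rfl; exact hax (madj_unique hPM hb.symm hMux)
      have hbv' : b ≠ v := by
        rintro rfl; exact haw (madj_unique hPM hb.symm hMvw)
      have hbw' : b ≠ w := by
        rintro rfl; exact hav (madj_unique hPM hb.symm hMvw.symm)
      have hbx' : b ≠ x := by
        rintro rfl; exact hau (madj_unique hPM hb.symm hMux.symm)
      refine ⟨b, Or.inl ⟨hb, ?_, ?_⟩, ?_⟩
      · intro he
        rcases Sym2.eq_iff.1 he with ⟨h', -⟩ | ⟨h', -⟩
        · exact hav h'
        · exact haw h'
      · intro he
        rcases Sym2.eq_iff.1 he with ⟨h', -⟩ | ⟨h', -⟩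
        · exact hau h'
        · exact hax h'
      · rintro c (⟨hM, -, -⟩ | h | h)
        · exact hbu c hM
        · rcases Sym2.eq_iff.1 h with ⟨h', -⟩ | ⟨h', -⟩
          · exact absurd h' hau
          · exact absurd h' haw
        · rcases Sym2.eq_iff.1 h with ⟨h', -⟩ | ⟨h', -⟩
          · exact absurd h' hav
          · exact absurd h' hax
  · intro a; exact Set.mem_univ a

lemma swapRel_v {M : G.Subgraph} (hPM : M.IsPerfectMatching)
    (hMvw : M.Adj v w) (huv : u ≠ v) (hxv : x ≠ v) {b : V} :
    swapRel M u v w x v b ↔ b = x := by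
  have hvwne : v ≠ w := (M.adj_sub hMvw).ne
  rw [swapRel]
  constructor
  · rintro (⟨hM, hn1, -⟩ | h | h)
    · have hc : b = w := madj_unique hPM hM hMvw
      exact absurd (by rw [hc]) hn1
    · rcases Sym2.eq_iff.1 h with ⟨h', -⟩ | ⟨h', -⟩
      · exact absurd h'.symm huv
      · exact absurd h' hvwne
    · rcases Sym2.eq_iff.1 h with ⟨-, h'⟩ | ⟨h', -⟩
      · exact h'
      · exact absurd h'.symm hxv
  · rintro rfl
    exact Or.inr (Or.inr rfl)

lemma swapRel_recover {M : G.Subgraph} (hPM : M.IsPerfectMatching)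
    (hMvw : M.Adj v w) (hMux : M.Adj u x) (hxw : x ≠ w) {a b : V} :
    M.Adj a b ↔
      (swapRel M u v w x a b ∧ s(a,b) ≠ s(u,w) ∧ s(a,b) ≠ s(v,x))
        ∨ s(a,b) = s(v,w) ∨ s(a,b) = s(u,x) := by
  rw [swapRel]
  constructor
  · intro hM
    by_cases hc1 : s(a,b) = s(v,w)
    · exact Or.inr (Or.inl hc1)
    by_cases hc2 : s(a,b) = s(u,x)
    · exact Or.inr (Or.inr hc2)
    refine Or.inl ⟨Or.inl ⟨hM, hc1, hc2⟩, ?_, ?_⟩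
    · intro he
      rcases Sym2.eq_iff.1 he with ⟨rfl, rfl⟩ | ⟨rfl, rfl⟩
      · exact hxw.symm (madj_unique hPM hM hMux)
      · exact hxw.symm (madj_unique hPM hM.symm hMux)
    · intro he
      rcases Sym2.eq_iff.1 he with ⟨rfl, rfl⟩ | ⟨rfl, rfl⟩
      · exact hxw (madj_unique hPM hM hMvw)
      · exact hxw (madj_unique hPM hM.symm hMvw)
  · rintro (⟨hA, hn1, hn2⟩ | h | h)
    · rcases hA with ⟨hM, -, -⟩ | h | h
      · exact hM
      · exact absurd h hn1
      · exact absurd h hn2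
    · rcases Sym2.eq_iff.1 h with ⟨rfl, rfl⟩ | ⟨rfl, rfl⟩
      · exact hMvw
      · exact hMvw.symm
    · rcases Sym2.eq_iff.1 h with ⟨rfl, rfl⟩ | ⟨rfl, rfl⟩
      · exact hMux
      · exact hMux.symm

end Matchings
section Main

variable {V : Type*} {G : SimpleGraph V} {u v w : V}

lemma xfacts {M : G.Subgraph} (hPM : M.IsPerfectMatching) (hMvw : M.Adj v w)
    (huv : u ≠ v) (huw : u ≠ w) :
    mpart M hPM u ≠ v ∧ mpart M hPM u ≠ w := by
  have hMux : M.Adj u (mpart M hPM u) := mpart_adj M hPM u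
  constructor
  · intro h
    rw [h] at hMux
    exact huw (madj_unique hPM hMux.symm hMvw)
  · intro h
    rw [h] at hMux
    exact huv (madj_unique hPM hMux.symm hMvw.symm)

open Classical in
noncomputable def Phi (G : SimpleGraph V) (u v w : V) (hvw : G.Adj v w)
    (huw : u ≠ w) (huv : u ≠ v) (hsub : ∀ y, G.Adj u y → y ≠ v → G.Adj v y)
    (M : G.Subgraph) : (swapG G u v w).Subgraph :=
  if h : M.Adj v w then
    if hPM : M.IsPerfectMatching then
      swapSub (swapG G u v w) M u v w (mpart M hPM u)
        (by rw [swapG_adj huw]; exact Or.inr rfl)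
        (by
          have hMux := mpart_adj M hPM u
          have hxf := xfacts hPM h huv huw
          rw [swapG_adj huw]
          refine Or.inl ⟨hsub _ (M.adj_sub hMux) hxf.1, ?_⟩
          intro he
          rcases Sym2.eq_iff.1 he with ⟨-, h'⟩ | ⟨h', -⟩
          · exact hxf.2 h'
          · exact hvw.ne h')
        (fun a b hM hn1 _ => (swapG_adj huw).2 (Or.inl ⟨M.adj_sub hM, hn1⟩))
    else ⊥
  else
    trivSub (swapG G u v w) M (by
      intro a b hM
      rw [swapG_adj huw]
      refine Or.inl ⟨M.adj_sub hM, ?_⟩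
      intro he
      rcases Sym2.eq_iff.1 he with ⟨rfl, rfl⟩ | ⟨rfl, rfl⟩
      · exact h hM
      · exact h hM.symm)

lemma perfmat_le_swap [Fintype V] (hvw : G.Adj v w) (hnuw : ¬ G.Adj u w)
    (huw : u ≠ w) (huv : u ≠ v) (hsub : ∀ y, G.Adj u y → y ≠ v → G.Adj v y) :
    perfmat G ≤ perfmat (swapG G u v w) := by
  classical
  have hfin : Finite (swapG G u v w).Subgraph := subgraph_finite _
  unfold perfmat
  refine Set.ncard_le_ncard_of_injOn (Phi G u v w hvw huw huv hsub) ?_ ?_ (Set.toFinite _)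
  · intro M hM
    simp only [Set.mem_setOf_eq] at hM ⊢
    by_cases h : M.Adj v w
    · rw [Phi, dif_pos h, dif_pos hM]
      exact swapSub_isPM hM h (mpart_adj M hM u) huv huw
        (xfacts hM h huv huw).1 (xfacts hM h huv huw).2
    · rw [Phi, dif_neg h]
      exact trivSub_isPM hM _
  · intro M1 hM1 M2 hM2 hEq
    simp only [Set.mem_setOf_eq] at hM1 hM2
    have hverts : M1.verts = M2.verts := by
      rw [Set.eq_univ_of_forall hM1.2, Set.eq_univ_of_forall hM2.2]
    by_cases h1 : M1.Adj v w <;> by_cases h2 : M2.Adj v w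
    · rw [Phi, dif_pos h1, dif_pos hM1, Phi, dif_pos h2, dif_pos hM2] at hEq
      have hAdj : swapRel M1 u v w (mpart M1 hM1 u) = swapRel M2 u v w (mpart M2 hM2 u) :=
        congrArg SimpleGraph.Subgraph.Adj hEq
      have hx12 : mpart M1 hM1 u = mpart M2 hM2 u := by
        have hv1 : swapRel M1 u v w (mpart M1 hM1 u) v (mpart M1 hM1 u) :=
          (swapRel_v hM1 h1 huv (xfacts hM1 h1 huv huw).1).2 rfl
        rw [hAdj] at hv1
        exact (swapRel_v hM2 h2 huv (xfacts hM2 h2 huv huw).1).1 hv1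
      refine SimpleGraph.Subgraph.ext hverts ?_
      funext a b
      have r1 := swapRel_recover (a := a) (b := b) hM1 h1 (mpart_adj M1 hM1 u)
        (xfacts hM1 h1 huv huw).2
      have r2 := swapRel_recover (a := a) (b := b) hM2 h2 (mpart_adj M2 hM2 u)
        (xfacts hM2 h2 huv huw).2
      refine propext ?_
      rw [r1, r2, hAdj, hx12]
    · exfalso
      have hadj1 : (Phi G u v w hvw huw huv hsub M1).Adj u w := by
        rw [Phi, dif_pos h1, dif_pos hM1]
        exact Or.inr (Or.inl rfl)
      rw [hEq, Phi, dif_neg h2] at hadj1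
      exact hnuw (M2.adj_sub hadj1)
    · exfalso
      have hadj2 : (Phi G u v w hvw huw huv hsub M2).Adj u w := by
        rw [Phi, dif_pos h2, dif_pos hM2]
        exact Or.inr (Or.inl rfl)
      rw [← hEq, Phi, dif_neg h1] at hadj2
      exact hnuw (M1.adj_sub hadj2)
    · rw [Phi, dif_neg h1, Phi, dif_neg h2] at hEq
      have hAdj := congrArg SimpleGraph.Subgraph.Adj hEq
      exact SimpleGraph.Subgraph.ext hverts hAdj

lemma step [Fintype V] (G : SimpleGraph V) (h : ¬ BalancedGraph G) :
    ∃ G' : SimpleGraph V, G'.edgeSet.ncard = G.edgeSet.ncard ∧ perfmat G ≤ perfmat G' ∧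
      ∑ a, ndeg G' a ^ 2 < ∑ a, ndeg G a ^ 2 := by
  rw [BalancedGraph, not_not] at h
  obtain ⟨u, v, hdeg, hsub⟩ := h
  have huv : u ≠ v := by
    rintro rfl; omega
  have hne : ¬ (G.neighborSet v ⊆ insert u (G.neighborSet u)) := by
    intro hss
    have h1 := Set.ncard_le_ncard hss (Set.Finite.insert _ (Set.toFinite _))
    have h2 := Set.ncard_insert_le u (G.neighborSet u)
    rw [ndeg, ndeg] at hdeg
    omega
  obtain ⟨w, hw1, hw2⟩ := Set.not_subset.1 hne
  simp only [Set.mem_insert_iff, not_or, SimpleGraph.mem_neighborSet] at hw1 hw2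
  have hvw : G.Adj v w := hw1
  have huw : u ≠ w := fun h' => hw2.1 h'.symm
  have hnuw : ¬ G.Adj u w := hw2.2
  exact ⟨swapG G u v w, swapG_ncard hvw hnuw huw,
    perfmat_le_swap hvw hnuw huw huv hsub,
    swapG_measure hvw hnuw huw huv hdeg⟩

lemma main_aux [Fintype V] : ∀ (N : ℕ) (G : SimpleGraph V), (∑ a, ndeg G a ^ 2) < N →
    ∃ G0 : SimpleGraph V, BalancedGraph G0 ∧ G0.edgeSet.ncard = G.edgeSet.ncard ∧
      perfmat G ≤ perfmat G0 := by
  intro N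
  induction N with
  | zero => intro G h; omega
  | succ N ih =>
    intro G h
    by_cases hb : BalancedGraph G
    · exact ⟨G, hb, rfl, le_rfl⟩
    · obtain ⟨G', he, hp, hlt⟩ := step G hb
      obtain ⟨G0, h1, h2, h3⟩ := ih G' (by omega)
      exact ⟨G0, h1, h2.trans he, hp.trans h3⟩

end Main


/-- For every simple graph `G` with `2n` vertices and `m` edges there is a balanced simple
graph `G₀` with `2n` vertices and `m` edges having at least as many perfect matchings. -/
theorem stmt_8 {V : Type*} [Fintype V] (G : SimpleGraph V) (n m : ℕ)
    (hV : Fintype.card V = 2 * n) (hE : G.edgeSet.ncard = m) :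
    ∃ G0 : SimpleGraph V, BalancedGraph G0 ∧ G0.edgeSet.ncard = m ∧ perfmat G ≤ perfmat G0 := by
  obtain ⟨G0, h1, h2, h3⟩ := main_aux (∑ a, ndeg G a ^ 2 + 1) G (by omega)
  exact ⟨G0, h1, h2.trans hE, h3⟩
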